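/- Let k > 0, α_d > 0, α_c > 0, β > 0, p_l ∈ ℝ, let K and L be natural numbers with α_c·K + α_d·(1+β)·L > 0, let s_1, …, s_K be the providers' states of charge and b_1, …, b_L, σ_1, …, σ_L be the receivers' capacities and states of charge. Define total supply E_d(p_d) = (Σ_{n=1}^{K} s_n)/α_d − (p_l − p_d)·K/(k·α_d) and total demand E_c(p_c) = (Σ_{m=1}^{L} (b_m − σ_m))/α_c − (p_l + p_c)·L/(k·α_c), and impose the price relation p_c = (1+β)·p_d. Then the market-clearing equation E_d(p_d) = E_c((1+β)·p_d) holds for a real number p_d if and only if p_d = [p_l·(α_c·K − α_d·L) − k·(α_c·Σ_{n=1}^{K} s_n − α_d·Σ_{m=1}^{L} (b_m − σ_m))] / (α_c·K + α_d·(1+β)·L). In particular, the clearing discharging price is unique and equal to this closed-form expression. -/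

import Mathlib

/-- the market clearing equation `E_d(p_d) = E_c((1+β)·p_d)` holds iff
`p_d` equals the closed-form clearing price of the paper (eqn (18)). -/
theorem market_clearing_price
    (k α_d α_c β p_l : ℝ) (hk : 0 < k) (hαd : 0 < α_d) (hαc : 0 < α_c) (hβ : 0 < β)
    (K L : ℕ)
    (hden : 0 < α_c * (K : ℝ) + α_d * (1 + β) * (L : ℝ))
    (s : Fin K → ℝ) (b σ : Fin L → ℝ)
    (Ed Ec : ℝ → ℝ)
    (hEd : ∀ p_d : ℝ,
      Ed p_d = (∑ n : Fin K, s n) / α_d - (p_l - p_d) * (K : ℝ) / (k * α_d))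
    (hEc : ∀ p_c : ℝ,
      Ec p_c = (∑ m : Fin L, (b m - σ m)) / α_c - (p_l + p_c) * (L : ℝ) / (k * α_c)) :
    ∀ p_d : ℝ, Ed p_d = Ec ((1 + β) * p_d) ↔
      p_d = (p_l * (α_c * (K : ℝ) - α_d * (L : ℝ))
              - k * (α_c * (∑ n : Fin K, s n) - α_d * (∑ m : Fin L, (b m - σ m))))
            / (α_c * (K : ℝ) + α_d * (1 + β) * (L : ℝ)) := by
  intro p_d
  simp only [Finset.sum_sub_distrib] at *
  rw [hEd, hEc]
  rw [eq_div_iff (ne_of_gt hden)]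
  have hkdc : (k * α_d * α_c) ≠ 0 := by positivity
  constructor
  · intro h
    field_simp at h
    apply mul_left_cancel₀ hkdc
    linear_combination (k * α_d * α_c) * h
  · intro h
    field_simp
    linear_combination h
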